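/- arXiv:1702.01892 — 2 statements merged into one kernel-verified Lean document; each statement's English description precedes it below -/
import Mathlib

section
/- Let M be a saturated model of a complete theory T, A a small subset of M, and D ⊆ M^n a relation that is not definable over A but such that (M, D) is saturated. Then there exists an automorphism f of M fixing A pointwise with f(D) ≠ D; that is, the orbit o(D/A) is not a singleton. -/
open FirstOrder FirstOrder.Language Set Cardinal

universe u v w

namespace Paper

/-- The language with a single `n`-ary relation symbol and no function symbols. -/
def relLang (n : ℕ) : FirstOrder.Language :=
  { Functions := fun _ => Empty, Relations := fun m => PLift (m = n) }

/-- The expansion of an `L`-structure `M` by a new `n`-ary relation interpreted as `D`. -/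
def expStruct (L : FirstOrder.Language) (M : Type w) [L.Structure M] (n : ℕ)
    (D : Set (Fin n → M)) : (L.sum (relLang n)).Structure M where
  funMap := fun {m} f x =>
    Sum.casesOn f (fun f => Structure.funMap f x) (fun f => f.elim)
  RelMap := fun {m} r x =>
    Sum.casesOn r (fun r => Structure.RelMap r x)
      (fun r => (fun i : Fin n => x (Fin.cast r.down.symm i)) ∈ D)

/-- `(M, D) ≡ (M, D')`: the two expansions are elementarily equivalent. -/
def eeqRel (L : FirstOrder.Language) (M : Type w) [L.Structure M] (n : ℕ)
    (D D' : Set (Fin n → M)) : Prop :=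
  @FirstOrder.Language.ElementarilyEquivalent (L.sum (relLang n)) M M
    (expStruct L M n D) (expStruct L M n D')

/-- Expansion by a unary predicate given as a set. -/
def expStruct1 (L : FirstOrder.Language) (M : Type w) [L.Structure M] (H : Set M) :
    (L.sum (relLang 1)).Structure M :=
  expStruct L M 1 {x | x 0 ∈ H}

/-- `(M, H) ≡ (N, H')` for unary predicates on possibly different structures. -/
def eeqPair (L : FirstOrder.Language) (M : Type w) (N : Type w) [L.Structure M] [L.Structure N]
    (H : Set M) (H' : Set N) : Prop :=
  @FirstOrder.Language.ElementarilyEquivalent (L.sum (relLang 1)) M N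
    (expStruct1 L M H) (expStruct1 L N H')

variable (L : FirstOrder.Language) (M : Type w) [L.Structure M]

/-- A structure is saturated if every finitely satisfiable collection of formulas in one
variable over a parameter set of cardinality less than that of the structure is realized. -/
def IsSaturated : Prop :=
  ∀ A : Set M, #A < #M →
    ∀ p : Set ((L[[A]]).Formula (Fin 1)),
      (∀ S : Finset ((L[[A]]).Formula (Fin 1)), ↑S ⊆ p →
        ∃ a : M, ∀ φ ∈ S, φ.Realize (fun _ => a)) →
      ∃ a : M, ∀ φ ∈ p, φ.Realize (fun _ => a)

/-- ω-saturation: types over finite parameter sets are realized. -/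
def IsOmegaSaturated : Prop :=
  ∀ A : Set M, A.Finite →
    ∀ p : Set ((L[[A]]).Formula (Fin 1)),
      (∀ S : Finset ((L[[A]]).Formula (Fin 1)), ↑S ⊆ p →
        ∃ a : M, ∀ φ ∈ S, φ.Realize (fun _ => a)) →
      ∃ a : M, ∀ φ ∈ p, φ.Realize (fun _ => a)

/-- Model-theoretic algebraic closure. -/
def acl (A : Set M) : Set M :=
  {b | ∃ φ : (L[[A]]).Formula (Fin 1),
    φ.Realize (fun _ => b) ∧ {c : M | φ.Realize (fun _ => c)}.Finite}

/-- Model-theoretic definable closure. -/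
def dcl (A : Set M) : Set M :=
  {b | ∃ φ : (L[[A]]).Formula (Fin 1), {c : M | φ.Realize (fun _ => c)} = {b}}

/-- The exchange property for algebraic closure. -/
def AclExchange : Prop :=
  ∀ (A : Set M) (x y : M), x ∈ acl L M (A ∪ {y}) → x ∉ acl L M A → y ∈ acl L M (A ∪ {x})

/-- Semantic elimination of the quantifier `∃^∞`. -/
def ElimInfinity : Prop :=
  ∀ (n : ℕ) (φ : L.Formula (Fin n ⊕ Fin 1)), ∃ ψ : L.Formula (Fin n),
    ∀ v : Fin n → M, ψ.Realize v ↔ {x : M | φ.Realize (Sum.elim v fun _ => x)}.Infinite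

/-- `M` is (a model of) a geometric theory: `acl` has exchange and `∃^∞` is eliminated. -/
def IsGeometricOn : Prop := AclExchange L M ∧ ElimInfinity L M

/-- `a` realizes the collection `p` of formulas over `A`. -/
def Realizes1 (A : Set M) (p : Set ((L[[A]]).Formula (Fin 1))) (a : M) : Prop :=
  ∀ φ ∈ p, φ.Realize (fun _ => a)

/-- A complete 1-type over `A ⊆ M`: finitely satisfiable in `M` and maximal. -/
def IsCompleteType (A : Set M) (p : Set ((L[[A]]).Formula (Fin 1))) : Prop :=
  (∀ S : Finset ((L[[A]]).Formula (Fin 1)), ↑S ⊆ p →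
    ∃ a : M, ∀ φ ∈ S, φ.Realize (fun _ => a)) ∧
  (∀ φ : (L[[A]]).Formula (Fin 1), φ ∈ p ∨ φ.not ∈ p)

/-- A 1-type is non-algebraic if all its formulas have infinitely many solutions. -/
def NonAlgType (A : Set M) (p : Set ((L[[A]]).Formula (Fin 1))) : Prop :=
  ∀ φ ∈ p, {a : M | φ.Realize (fun _ => a)}.Infinite

/-- `(M, H)` is an `H`-structure. -/
structure IsHStructure (H : Set M) : Prop where
  indep : ∀ h ∈ H, h ∉ acl L M (H \ {h})
  density : ∀ A : Set M, A.Finite → ∀ p, IsCompleteType L M A p → NonAlgType L M A p →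
    ∃ a ∈ H, Realizes1 L M A p a
  extension : ∀ A : Set M, A.Finite → ∀ p, IsCompleteType L M A p → NonAlgType L M A p →
    ∃ a : M, Realizes1 L M A p a ∧ a ∉ acl L M (A ∪ H)

/-- Density over all small sets. -/
def DensitySmall (H : Set M) : Prop :=
  ∀ A : Set M, #A < #M → ∀ p, IsCompleteType L M A p → NonAlgType L M A p →
    ∃ a ∈ H, Realizes1 L M A p a

/-- Extension over all small sets. -/
def ExtensionSmall (H : Set M) : Prop :=
  ∀ A : Set M, #A < #M → ∀ p, IsCompleteType L M A p → NonAlgType L M A p →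
    ∃ a : M, Realizes1 L M A p a ∧ a ∉ acl L M (A ∪ H)

/-- `S` is algebraically independent over `B`. -/
def AclIndepSet (B S : Set M) : Prop :=
  ∀ s ∈ S, s ∉ acl L M (B ∪ (S \ {s}))

/-- `A` is independent from `C` over `B` in the `acl`-pregeometry. -/
def IndepOver (A B C : Set M) : Prop :=
  ∀ S ⊆ A, AclIndepSet L M B S → AclIndepSet L M (B ∪ C) S

/-- The semantic content of the axioms of `T^indep` in the structure `(M, H)`. -/
structure SatTindep (H : Set M) : Prop where
  indep : ∀ h ∈ H, h ∉ acl L M (H \ {h})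
  density : ∀ (n : ℕ) (φ : L.Formula (Fin n ⊕ Fin 1)) (v : Fin n → M),
    {x : M | φ.Realize (Sum.elim v fun _ => x)}.Infinite →
    ∃ x ∈ H, φ.Realize (Sum.elim v fun _ => x)
  extension : ∀ (n m : ℕ) (φ : L.Formula (Fin n ⊕ Fin 1))
    (ψ : L.Formula ((Fin n ⊕ Fin m) ⊕ Fin 1)) (v : Fin n → M),
    (∃ k : ℕ, ∀ u : Fin n → M, ∀ w : Fin m → M,
      {x : M | ψ.Realize (Sum.elim (Sum.elim u w) fun _ => x)}.Finite ∧
      {x : M | ψ.Realize (Sum.elim (Sum.elim u w) fun _ => x)}.ncard < k) →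
    {x : M | φ.Realize (Sum.elim v fun _ => x)}.Infinite →
    ∃ x : M, φ.Realize (Sum.elim v fun _ => x) ∧
      ∀ w : Fin m → M, (∀ i, w i ∈ H) →
        ¬ ψ.Realize (Sum.elim (Sum.elim v w) fun _ => x)

/-- `P` is (the universe of) an elementary substructure, via the Tarski–Vaught test. -/
def IsElemSubstructure (P : Set M) : Prop :=
  ∀ (n : ℕ) (φ : L.Formula (Fin n ⊕ Fin 1)) (v : Fin n → M), (∀ i, v i ∈ P) →
    (∃ x : M, φ.Realize (Sum.elim v fun _ => x)) →
    ∃ x ∈ P, φ.Realize (Sum.elim v fun _ => x)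

end Paper

namespace S5

variable {L : FirstOrder.Language.{u, v}} {M : Type w} [L.Structure M]

/-- parameter sets over which types must be realized -/
def Small (M : Type w) (B : Set M) : Prop := Finite M ∨ #B < #M

def SmallP (M : Type w) (G : Set (M × M)) : Prop := Finite M ∨ #G < #M

theorem Small.mono {B C : Set M} (h : Small M C) (hle : #B ≤ #C) : Small M B :=
  h.imp id fun h' => lt_of_le_of_lt hle h'

theorem SmallP.snd_image {G : Set (M × M)} (h : SmallP M G) : Small M (Prod.snd '' G) :=
  h.imp id fun h' => lt_of_le_of_lt (Cardinal.mk_image_le) h'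

theorem Small.insert {B : Set M} (h : Small M B) (x : M) : Small M (insert x B) := by
  rcases h with h | h
  · exact Or.inl h
  · rcases finite_or_infinite M with hf | hf
    · exact Or.inl hf
    · refine Or.inr (lt_of_le_of_lt (Cardinal.mk_insert_le) ?_)
      exact Cardinal.add_lt_of_lt (Cardinal.infinite_iff.1 hf) h
        (lt_of_lt_of_le Cardinal.one_lt_aleph0 (Cardinal.infinite_iff.1 hf))

theorem Small.union_range {B : Set M} (h : Small M B) {k : ℕ} (w : Fin k → M) :
    Small M (B ∪ Set.range w) := by
  rcases h with h | h
  · exact Or.inl h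
  · rcases finite_or_infinite M with hf | hf
    · exact Or.inl hf
    · have hr : #(Set.range w) < #M := by
        exact lt_of_lt_of_le (Set.finite_range w).lt_aleph0 (Cardinal.infinite_iff.1 hf)
      exact Or.inr (lt_of_le_of_lt (Cardinal.mk_union_le _ _)
        (Cardinal.add_lt_of_lt (Cardinal.infinite_iff.1 hf) h hr))

/-- In a finite structure, finite satisfiability implies satisfiability. -/
theorem finite_sat [Finite M] {α : Type*} (p : Set (L.Formula α))
    (hp : ∀ S : Finset (L.Formula α), ↑S ⊆ p → ∃ v : α → M, ∀ φ ∈ S, φ.Realize v)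
    [Finite α] : ∃ v : α → M, ∀ φ ∈ p, φ.Realize v := by
  classical
  let R : L.Formula α → Set (α → M) := fun φ => setOf φ.Realize
  let C : Set (Set (α → M)) := {s | ∃ S : Finset (L.Formula α), ↑S ⊆ p ∧ s = ⋂ φ ∈ S, R φ}
  have hCne : C.Nonempty := ⟨⋂ φ ∈ (∅ : Finset (L.Formula α)), R φ, ∅, by simp, rfl⟩
  obtain ⟨m, hmC, hmin⟩ := (Finite.to_wellFoundedLT (α := Set (α → M))).wf.has_min C hCne
  obtain ⟨S, hS, rfl⟩ := hmC
  obtain ⟨v, hv⟩ := hp S hS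
  have hvm : v ∈ ⋂ φ ∈ S, R φ := by simp only [Set.mem_iInter]; exact fun φ h => hv φ h
  refine ⟨v, fun φ hφ => ?_⟩
  have hsub : (⋂ ψ ∈ (insert φ S : Finset _), R ψ) ∈ C := ⟨insert φ S, by simp [Set.insert_subset_iff, hφ, hS], rfl⟩
  have : ¬ (⋂ ψ ∈ (insert φ S : Finset _), R ψ) < (⋂ ψ ∈ S, R ψ) := hmin _ hsub
  have hle : (⋂ ψ ∈ (insert φ S : Finset _), R ψ) ≤ (⋂ ψ ∈ S, R ψ) := by
    intro x hx
    simp only [Set.mem_iInter, Finset.mem_insert] at hx ⊢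
    exact fun ψ h => hx ψ (Or.inr h)
  have heq : (⋂ ψ ∈ (insert φ S : Finset _), R ψ) = (⋂ ψ ∈ S, R ψ) :=
    le_antisymm hle (by by_contra h; exact this (lt_of_le_of_ne hle (by intro h'; exact h (h' ▸ le_rfl))))
  have : v ∈ ⋂ ψ ∈ (insert φ S : Finset _), R ψ := heq ▸ hvm
  simp only [Set.mem_iInter, Finset.mem_insert] at this
  exact this φ (Or.inl rfl)



section Helpers
variable {L : FirstOrder.Language.{u, v}} {M : Type w} [L.Structure M]

/-- Finite conjunctions. -/
theorem exists_conj {α : Type*} (S : Finset (L.Formula α)) :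
    ∃ ψ : L.Formula α, ∀ v : α → M, ψ.Realize v ↔ ∀ φ ∈ S, φ.Realize v := by
  classical
  exact ⟨BoundedFormula.iInf (fun φ : S => φ.1), fun v => (BoundedFormula.realize_iInf (v' := default)).trans
    ⟨fun h φ hφ => h ⟨φ, hφ⟩, fun h b => h b.1 b.2⟩⟩

/-- Finite disjunctions. -/
theorem exists_disj {α : Type*} (S : Finset (L.Formula α)) :
    ∃ ψ : L.Formula α, ∀ v : α → M, ψ.Realize v ↔ ∃ φ ∈ S, φ.Realize v := by
  classical
  exact ⟨BoundedFormula.iSup (fun φ : S => φ.1), fun v => (BoundedFormula.realize_iSup (v' := default)).trans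
    ⟨fun ⟨b, hb⟩ => ⟨b.1, b.2, hb⟩, fun ⟨φ, hφ, h⟩ => ⟨⟨φ, hφ⟩, h⟩⟩⟩

/-- Existential projection of the last variable (snoc form). -/
theorem exists_proj {k : ℕ} (φ : L.Formula (Fin (k + 1))) :
    ∃ ψ : L.Formula (Fin k), ∀ v : Fin k → M,
      ψ.Realize v ↔ ∃ y : M, φ.Realize (Fin.snoc v y) := by
  classical
  let g : Fin (k + 1) → Fin k ⊕ Fin 1 :=
    Fin.lastCases (Sum.inr 0) (fun i => Sum.inl i)
  refine ⟨(BoundedFormula.relabel g φ).ex, fun v => ?_⟩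
  rw [Formula.Realize, BoundedFormula.realize_ex]
  refine exists_congr fun y => ?_
  rw [BoundedFormula.realize_relabel]
  have h1 : (Sum.elim v ((Fin.snoc default y : Fin 1 → M) ∘ Fin.castAdd 0) ∘ g)
      = Fin.snoc v y := by
    funext i
    refine Fin.lastCases ?_ (fun j => ?_) i
    · simp [g, Fin.snoc]
    · simp [g, Fin.snoc_castSucc]
  rw [h1, Subsingleton.elim (Fin.snoc default y ∘ Fin.natAdd 1 : Fin 0 → M) default]
  rfl

/-- Existential projection, Sum form. -/
theorem exists_proj_sum {k : ℕ} (φ : L.Formula (Fin k ⊕ Fin 1)) :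
    ∃ ψ : L.Formula (Fin k), ∀ v : Fin k → M,
      ψ.Realize v ↔ ∃ y : M, φ.Realize (Sum.elim v (fun _ => y)) := by
  classical
  let g : Fin k ⊕ Fin 1 → Fin k ⊕ Fin 1 := Sum.elim Sum.inl (fun _ => Sum.inr 0)
  refine ⟨(BoundedFormula.relabel g φ).ex, fun v => ?_⟩
  rw [Formula.Realize, BoundedFormula.realize_ex]
  refine exists_congr fun y => ?_
  rw [BoundedFormula.realize_relabel]
  have h1 : (Sum.elim v ((Fin.snoc default y : Fin 1 → M) ∘ Fin.castAdd 0) ∘ g)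
      = Sum.elim v (fun _ => y) := by
    funext i
    rcases i with i | i
    · simp [g]
    · have : i = 0 := Subsingleton.elim _ _
      subst this
      simp [g, Fin.snoc]
  rw [h1, Subsingleton.elim (Fin.snoc default y ∘ Fin.natAdd 1 : Fin 0 → M) default]
  rfl

/-- Substituting constants for the `Sum.inl` variables, pure-`L` version. -/
theorem exists_subst_sum {k : ℕ} (B : Set M) (φ : L.Formula (Fin k ⊕ Fin 1))
    (v : Fin k → M) (hv : ∀ i, v i ∈ B) :
    ∃ ξ : (L[[B]]).Formula (Fin 1), ∀ y : M,
      ξ.Realize (fun _ => y) ↔ φ.Realize (Sum.elim v (fun _ => y)) := by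
  classical
  let t : (Fin k ⊕ Fin 1) → (L[[B]]).Term (Fin 1) :=
    Sum.elim (fun i => (L.con ⟨v i, hv i⟩).term) (fun _ => Term.var 0)
  refine ⟨((L.lhomWithConstants B).onFormula φ).subst t, fun y => ?_⟩
  have h0 : Formula.Realize (M := M) (((L.lhomWithConstants ↑B).onFormula φ).subst t) (fun _ => y)
      = BoundedFormula.Realize (((L.lhomWithConstants ↑B).onFormula φ).subst t) (fun _ => y) default := rfl
  rw [h0, BoundedFormula.realize_subst]
  have h1 : (fun a => Term.realize (M := M) (fun _ => y) (t a)) = Sum.elim v (fun _ => y) := by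
    funext a
    rcases a with i | i
    · simp [t]
    · simp [t]
  rw [h1]
  exact LHom.realize_onFormula _ _

/-- Substituting constants (from a larger set) for the initial variables, `L[[B]]` version. -/
theorem exists_subst_snoc {k : ℕ} {B B' : Set M} (h : B ⊆ B')
    (φ : (L[[B]]).Formula (Fin (k + 1))) (w : Fin k → M) (hw : ∀ i, w i ∈ B') :
    ∃ ξ : (L[[B']]).Formula (Fin 1), ∀ y : M,
      ξ.Realize (fun _ => y) ↔ φ.Realize (Fin.snoc w y) := by
  classical
  let t : Fin (k + 1) → (L[[B']]).Term (Fin 1) :=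
    Fin.snoc (fun i => (L.con ⟨w i, hw i⟩).term) (Term.var 0)
  refine ⟨((L.lhomWithConstantsMap (Set.inclusion h)).onFormula φ).subst t, fun y => ?_⟩
  have h0 : Formula.Realize (M := M) (((L.lhomWithConstantsMap (Set.inclusion h)).onFormula φ).subst t) (fun _ => y)
      = BoundedFormula.Realize (((L.lhomWithConstantsMap (Set.inclusion h)).onFormula φ).subst t) (fun _ => y) default := rfl
  rw [h0, BoundedFormula.realize_subst]
  have h1 : (fun a => Term.realize (M := M) (fun _ => y) (t a)) = Fin.snoc w y := by
    funext a
    refine Fin.lastCases ?_ (fun j => ?_) a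
    · simp [t, Fin.snoc]
    · simp [t, Fin.snoc_castSucc]
  rw [h1]
  exact LHom.realize_onFormula _ _

end Helpers

section Sat
variable {L : FirstOrder.Language.{u, v}} {M : Type w} [L.Structure M]

/-- 1-variable saturation over all small parameter sets. -/
def Sat1 (L : FirstOrder.Language.{u, v}) (M : Type w) [L.Structure M] : Prop :=
  ∀ B : Set M, Small M B → ∀ p : Set ((L[[B]]).Formula (Fin 1)),
    (∀ S : Finset ((L[[B]]).Formula (Fin 1)), ↑S ⊆ p →
      ∃ a : M, ∀ φ ∈ S, φ.Realize (fun _ => a)) →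
    ∃ a : M, ∀ φ ∈ p, φ.Realize (fun _ => a)

/-- k-variable saturation from 1-variable saturation. -/
theorem satK (h1 : Sat1 L M) (k : ℕ) (B : Set M) (hB : Small M B)
    (p : Set ((L[[B]]).Formula (Fin k)))
    (hp : ∀ S : Finset ((L[[B]]).Formula (Fin k)), ↑S ⊆ p →
      ∃ v : Fin k → M, ∀ φ ∈ S, φ.Realize v) :
    ∃ v : Fin k → M, ∀ φ ∈ p, φ.Realize v := by
  classical
  induction k generalizing B with
  | zero =>
    refine ⟨default, fun φ hφ => ?_⟩
    obtain ⟨v, hv⟩ := hp {φ} (by simpa using hφ)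
    have := hv φ (Finset.mem_singleton_self φ)
    rwa [Subsingleton.elim (α := Fin 0 → M) v default] at this
  | succ m ih =>
    -- the projected type
    set q : Set ((L[[B]]).Formula (Fin m)) :=
      {χ | ∃ S : Finset ((L[[B]]).Formula (Fin (m + 1))), ↑S ⊆ p ∧
        ∀ v : Fin m → M, (χ.Realize v ↔ ∃ y : M, ∀ φ ∈ S, φ.Realize (Fin.snoc v y))} with hq
    have hqfs : ∀ T : Finset ((L[[B]]).Formula (Fin m)), ↑T ⊆ q →
        ∃ v : Fin m → M, ∀ χ ∈ T, χ.Realize v := by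
      intro T hT
      set S : Finset ((L[[B]]).Formula (Fin (m + 1))) :=
        T.biUnion (fun χ => if h : χ ∈ q then h.choose else ∅) with hS
      have hSp : ↑S ⊆ p := by
        intro φ hφ
        simp only [hS, Finset.coe_biUnion, Set.mem_iUnion, Finset.mem_coe] at hφ
        obtain ⟨χ, hχT, hφ⟩ := hφ
        rw [dif_pos (hT hχT)] at hφ
        exact (hT hχT).choose_spec.1 hφ
      obtain ⟨v, hv⟩ := hp S hSp
      refine ⟨Fin.init v, fun χ hχT => ?_⟩
      have hχq := hT hχT
      rw [(hχq.choose_spec.2 (Fin.init v))]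
      refine ⟨v (Fin.last m), fun φ hφ => ?_⟩
      rw [Fin.snoc_init_self]
      refine hv φ ?_
      simp only [hS, Finset.mem_biUnion]
      exact ⟨χ, hχT, by rw [dif_pos hχq]; exact hφ⟩
    obtain ⟨w, hw⟩ := ih B hB q hqfs
    -- the type of the last coordinate over B ∪ range w
    set B' : Set M := B ∪ Set.range w with hB'
    have hBB' : B ⊆ B' := Set.subset_union_left
    have hwB' : ∀ i, w i ∈ B' := fun i => Or.inr ⟨i, rfl⟩
    set r : Set ((L[[B']]).Formula (Fin 1)) :=
      {ξ | ∃ φ ∈ p, ∀ y : M, (ξ.Realize (fun _ => y) ↔ φ.Realize (Fin.snoc w y))} with hr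
    have hrfs : ∀ T : Finset ((L[[B']]).Formula (Fin 1)), ↑T ⊆ r →
        ∃ a : M, ∀ ξ ∈ T, ξ.Realize (fun _ => a) := by
      intro T hT
      set S : Finset ((L[[B]]).Formula (Fin (m + 1))) :=
        T.biUnion (fun ξ => if h : ξ ∈ r then {h.choose} else ∅) with hS
      have hSp : ↑S ⊆ p := by
        intro φ hφ
        simp only [hS, Finset.coe_biUnion, Set.mem_iUnion, Finset.mem_coe] at hφ
        obtain ⟨ξ, hξT, hφ⟩ := hφ
        rw [dif_pos (hT hξT)] at hφ
        simp only [Finset.mem_singleton] at hφ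
        exact hφ ▸ (hT hξT).choose_spec.1
      obtain ⟨ψS, hψS⟩ := exists_conj (M := M) S
      obtain ⟨χ, hχ⟩ := exists_proj (M := M) ψS
      have hχq : χ ∈ q := by
        refine ⟨S, hSp, fun v => ?_⟩
        rw [hχ v]
        exact exists_congr fun y => hψS _
      have hχw := hw χ hχq
      obtain ⟨y, hy⟩ := (hχ w).1 hχw |>.imp (fun y hy => (hψS _).1 hy)
      refine ⟨y, fun ξ hξT => ?_⟩
      have hξr := hT hξT
      rw [hξr.choose_spec.2 y]
      refine hy _ ?_
      simp only [hS, Finset.mem_biUnion]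
      exact ⟨ξ, hξT, by rw [dif_pos hξr]; simp⟩
    obtain ⟨a, ha⟩ := h1 B' (hB.union_range w) r hrfs
    refine ⟨Fin.snoc w a, fun φ hφ => ?_⟩
    obtain ⟨ξ, hξ⟩ := exists_subst_snoc hBB' φ w hwB'
    have hξr : ξ ∈ r := ⟨φ, hφ, hξ⟩
    exact (hξ a).1 (ha ξ hξr)

end Sat

section Elem
variable {L : FirstOrder.Language.{u, v}} {M : Type w} [L.Structure M]

/-- `G` is the graph of a partial elementary self-map of `M`. -/
def Elem (L : FirstOrder.Language.{u, v}) {M : Type w} [L.Structure M] (G : Set (M × M)) : Prop :=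
  ∀ (k : ℕ) (φ : L.Formula (Fin k)) (t : Fin k → M × M),
    (∀ i, t i ∈ G) → (φ.Realize (fun i => (t i).1) ↔ φ.Realize (fun i => (t i).2))

theorem Elem.mono {G G' : Set (M × M)} (h : Elem L G') (hsub : G ⊆ G') : Elem L G :=
  fun k φ t ht => h k φ t (fun i => hsub (ht i))

theorem Elem.swap {G : Set (M × M)} (h : Elem L G) : Elem L (Prod.swap ⁻¹' G) :=
  fun k φ t ht => (h k φ (fun i => (t i).swap) (fun i => ht i)).symm

theorem Elem.right_unique {G : Set (M × M)} (h : Elem L G) {a b b' : M}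
    (hab : (a, b) ∈ G) (hab' : (a, b') ∈ G) : b = b' := by
  have := h 2 (Term.equal (Term.var 0) (Term.var 1)) ![(a, b), (a, b')]
    (by intro i; fin_cases i <;> assumption)
  simp only [Formula.realize_equal, Term.realize_var] at this
  have h2 := this.1 (by simp [Matrix.cons_val_zero, Matrix.cons_val_one])
  simpa using h2

theorem Elem.left_unique {G : Set (M × M)} (h : Elem L G) {a a' b : M}
    (hab : (a, b) ∈ G) (hab' : (a', b) ∈ G) : a = a' := by
  refine h.swap.right_unique (a := b) (b := a) (b' := a') ?_ ?_ <;> simpa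

end Elem
section Forth
variable {L : FirstOrder.Language.{u, v}} {M : Type w} [L.Structure M]

/-- One-sided elementary transfer of `a` to `b` over `G`. -/
def Key (L : FirstOrder.Language.{u, v}) {M : Type w} [L.Structure M]
    (G : Set (M × M)) (a b : M) : Prop :=
  ∀ (k : ℕ) (φ : L.Formula (Fin k ⊕ Fin 1)) (t : Fin k → M × M), (∀ i, t i ∈ G) →
    φ.Realize (Sum.elim (fun i => (t i).1) (fun _ => a)) →
    φ.Realize (Sum.elim (fun i => (t i).2) (fun _ => b))

theorem Key.iff {G : Set (M × M)} {a b : M} (hK : Key L G a b)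
    (k : ℕ) (φ : L.Formula (Fin k ⊕ Fin 1)) (t : Fin k → M × M) (ht : ∀ i, t i ∈ G) :
    φ.Realize (Sum.elim (fun i => (t i).1) (fun _ => a)) ↔
      φ.Realize (Sum.elim (fun i => (t i).2) (fun _ => b)) := by
  refine ⟨hK k φ t ht, fun h => ?_⟩
  by_contra hna
  have := hK k φ.not t ht (by rwa [Formula.realize_not])
  rw [Formula.realize_not] at this
  exact this h

theorem Key.insert {G : Set (M × M)} {a b : M} (hG : Elem L G) (hK : Key L G a b) :
    Elem L (Insert.insert (a, b) G) := by
  classical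
  intro k φ t ht
  rcases Set.eq_empty_or_nonempty G with rfl | ⟨g₀, hg₀⟩
  · have hta : ∀ i, t i = (a, b) := by
      intro i; have := ht i; simpa using this
    have h0 := hK.iff 0 (φ.relabel (fun _ : Fin k => Sum.inr 0)) Fin.elim0 (fun i => i.elim0)
    rw [Formula.realize_relabel, Formula.realize_relabel] at h0
    refine (iff_of_eq (congrArg φ.Realize ?_)).trans
      (h0.trans (iff_of_eq (congrArg φ.Realize ?_)))
    · funext i; simp [hta i]
    · funext i; simp [hta i]
  · have ht'G : ∀ i, (if t i ∈ G then t i else g₀) ∈ G := by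
      intro i; split
      · assumption
      · exact hg₀
    have h0 := hK.iff k (φ.relabel (fun i => if t i ∈ G then Sum.inl i else Sum.inr 0))
      (fun i => if t i ∈ G then t i else g₀) ht'G
    rw [Formula.realize_relabel, Formula.realize_relabel] at h0
    refine (iff_of_eq (congrArg φ.Realize ?_)).trans
      (h0.trans (iff_of_eq (congrArg φ.Realize ?_)))
    · funext i
      by_cases h : t i ∈ G
      · simp [h]
      · have hab : t i = (a, b) := (Set.mem_insert_iff.1 (ht i)).resolve_right h
        simp only [Function.comp_apply, if_neg h, Sum.elim_inr]
        rw [hab]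
    · funext i
      by_cases h : t i ∈ G
      · simp [h]
      · have hab : t i = (a, b) := (Set.mem_insert_iff.1 (ht i)).resolve_right h
        simp only [Function.comp_apply, if_neg h, Sum.elim_inr]
        rw [hab]

theorem Elem.forth (h1 : Sat1 L M) {G : Set (M × M)} (hG : Elem L G)
    (hsm : SmallP M G) (a : M) : ∃ b, Elem L (Insert.insert (a, b) G) := by
  classical
  set B : Set M := Prod.snd '' G with hB
  set p : Set ((L[[B]]).Formula (Fin 1)) :=
    {ξ | ∃ (k : ℕ) (φ : L.Formula (Fin k ⊕ Fin 1)) (t : Fin k → M × M),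
      (∀ i, t i ∈ G) ∧ φ.Realize (Sum.elim (fun i => (t i).1) (fun _ => a)) ∧
      ∀ y : M, (ξ.Realize (fun _ => y) ↔
        φ.Realize (Sum.elim (fun i => (t i).2) (fun _ => y)))} with hp
  have hcomb : ∀ S : Finset ((L[[B]]).Formula (Fin 1)), ↑S ⊆ p →
      ∃ (k : ℕ) (φ : L.Formula (Fin k ⊕ Fin 1)) (t : Fin k → M × M),
        (∀ i, t i ∈ G) ∧ φ.Realize (Sum.elim (fun i => (t i).1) (fun _ => a)) ∧
        ∀ y : M, φ.Realize (Sum.elim (fun i => (t i).2) (fun _ => y)) →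
          ∀ ξ ∈ S, ξ.Realize (fun _ => y) := by
    intro S
    induction S using Finset.induction_on with
    | empty =>
      intro _
      exact ⟨0, ⊤, Fin.elim0, fun i => i.elim0, by simp, fun y _ ξ h => absurd h (by simp)⟩
    | @insert ξ S hξS ih =>
      intro hsub
      obtain ⟨k₂, φ₂, t₂, ht₂, ha₂, hy₂⟩ := ih (fun x hx => hsub (Finset.mem_insert_of_mem hx))
      obtain ⟨k₁, φ₁, t₁, ht₁, ha₁, hy₁⟩ := hsub (Finset.mem_insert_self ξ S)
      refine ⟨k₁ + k₂,
        (φ₁.relabel (Sum.map (Fin.castAdd k₂) (id : Fin 1 → Fin 1))) ⊓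
          (φ₂.relabel (Sum.map (Fin.natAdd k₁) (id : Fin 1 → Fin 1))),
        Fin.append t₁ t₂, ?_, ?_, ?_⟩
      · intro i
        refine Fin.addCases (fun j => ?_) (fun j => ?_) i
        · rw [Fin.append_left]; exact ht₁ j
        · rw [Fin.append_right]; exact ht₂ j
      · rw [Formula.realize_inf, Formula.realize_relabel, Formula.realize_relabel]
        constructor
        · convert ha₁ using 2
          funext x; rcases x with i | i
          · simp [Fin.append_left]
          · simp
        · convert ha₂ using 2
          funext x; rcases x with i | i
          · simp [Fin.append_right]
          · simp
      · intro y hy ξ' hξ'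
        rw [Formula.realize_inf, Formula.realize_relabel, Formula.realize_relabel] at hy
        have hc1 : φ₁.Realize (Sum.elim (fun i => (t₁ i).2) (fun _ => y)) := by
          convert hy.1 using 2
          funext x; rcases x with i | i
          · simp [Fin.append_left]
          · simp
        have hc2 : φ₂.Realize (Sum.elim (fun i => (t₂ i).2) (fun _ => y)) := by
          convert hy.2 using 2
          funext x; rcases x with i | i
          · simp [Fin.append_right]
          · simp
        rcases Finset.mem_insert.1 hξ' with rfl | hmem
        · exact (hy₁ y).2 hc1
        · exact hy₂ y hc2 ξ' hmem
  have hpfs : ∀ S : Finset ((L[[B]]).Formula (Fin 1)), ↑S ⊆ p →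
      ∃ y : M, ∀ ξ ∈ S, ξ.Realize (fun _ => y) := by
    intro S hS
    obtain ⟨k, φ, t, ht, ha, hy⟩ := hcomb S hS
    obtain ⟨ψ, hψ⟩ := exists_proj_sum (M := M) φ
    have hiff := hG k ψ t ht
    obtain ⟨y, hyy⟩ := (hψ _).1 (hiff.1 ((hψ _).2 ⟨a, ha⟩))
    exact ⟨y, fun ξ h => hy y hyy ξ h⟩
  obtain ⟨b, hb⟩ := h1 B hsm.snd_image p hpfs
  have hK : Key L G a b := by
    intro k φ t ht hfa
    obtain ⟨ξ, hξ⟩ := exists_subst_sum B φ (fun i => (t i).2) (fun i => ⟨t i, ht i, rfl⟩)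
    exact (hξ b).1 (hb ξ ⟨k, φ, t, ht, hfa, hξ⟩)
  exact ⟨b, hK.insert hG⟩

theorem SmallP.swap {G : Set (M × M)} (h : SmallP M G) : SmallP M (Prod.swap ⁻¹' G) :=
  h.imp id fun h' => lt_of_le_of_lt
    (by rw [← Set.image_swap_eq_preimage_swap]; exact Cardinal.mk_image_le) h'

theorem Elem.back (h1 : Sat1 L M) {G : Set (M × M)} (hG : Elem L G)
    (hsm : SmallP M G) (x : M) : ∃ c, Elem L (Insert.insert (c, x) G) := by
  obtain ⟨c, hc⟩ := Elem.forth h1 hG.swap hsm.swap x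
  refine ⟨c, ?_⟩
  have he : Prod.swap ⁻¹' (Insert.insert (x, c) (Prod.swap ⁻¹' G)) = Insert.insert (c, x) G := by
    ext ⟨u, v⟩
    simp [Prod.ext_iff, and_comm]
  rw [← he]
  exact hc.swap

end Forth
section Recursion
variable {L : FirstOrder.Language.{u, v}} {M : Type w} [L.Structure M]

theorem SmallP.insert {G : Set (M × M)} (h : SmallP M G) (p : M × M) :
    SmallP M (Insert.insert p G) := by
  rcases h with h | h
  · exact Or.inl h
  · rcases finite_or_infinite M with hf | hf
    · exact Or.inl hf
    · refine Or.inr (lt_of_le_of_lt (Cardinal.mk_insert_le) ?_)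
      exact Cardinal.add_lt_of_lt (Cardinal.infinite_iff.1 hf) h
        (lt_of_lt_of_le Cardinal.one_lt_aleph0 (Cardinal.infinite_iff.1 hf))

variable (L)

open Classical in
noncomputable def step1 (H : Set (M × M)) (x : M) : Set (M × M) :=
  if h : ∃ b, Elem L (Insert.insert (x, b) H) then Insert.insert (x, h.choose) H else H

open Classical in
noncomputable def step2 (H : Set (M × M)) (x : M) : Set (M × M) :=
  if h : ∃ c, Elem L (Insert.insert (c, x) H) then Insert.insert (h.choose, x) H else H

noncomputable def step (H : Set (M × M)) (x : M) : Set (M × M) :=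
  step2 L (step1 L H x) x

variable {L}

theorem subset_step1 (H : Set (M × M)) (x : M) : H ⊆ step1 L H x := by
  unfold step1; split
  · exact Set.subset_insert _ _
  · exact subset_rfl

theorem subset_step2 (H : Set (M × M)) (x : M) : H ⊆ step2 L H x := by
  unfold step2; split
  · exact Set.subset_insert _ _
  · exact subset_rfl

theorem subset_step (H : Set (M × M)) (x : M) : H ⊆ step L H x :=
  (subset_step1 H x).trans (subset_step2 (step1 L H x) x)

theorem step1_subset (H : Set (M × M)) (x : M) : ∃ p, step1 L H x ⊆ Insert.insert p H := by
  unfold step1; split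
  · exact ⟨_, subset_rfl⟩
  · exact ⟨(x, x), Set.subset_insert _ _⟩

theorem step_subset (H : Set (M × M)) (x : M) :
    ∃ p q, step L H x ⊆ Insert.insert p (Insert.insert q H) := by
  obtain ⟨q, hq⟩ := step1_subset (L := L) H x
  unfold step step2
  split
  · exact ⟨_, q, Set.insert_subset_insert hq⟩
  · exact ⟨(x, x), q, hq.trans (Set.subset_insert _ _)⟩

theorem step_elem (h1 : Sat1 L M) {H : Set (M × M)} (hH : Elem L H) (hsm : SmallP M H)
    (x : M) : Elem L (step L H x) ∧ (∃ b, (x, b) ∈ step L H x) ∧ ∃ c, (c, x) ∈ step L H x := by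
  obtain ⟨b, hb⟩ := hH.forth h1 hsm x
  have h1pos : step1 L H x = Insert.insert (x, (⟨b, hb⟩ : ∃ b, Elem L (Insert.insert (x, b) H)).choose) H := by
    unfold step1; rw [dif_pos ⟨b, hb⟩]
  have hH1 : Elem L (step1 L H x) := by
    rw [h1pos]; exact (⟨b, hb⟩ : ∃ b, Elem L (Insert.insert (x, b) H)).choose_spec
  have hxH1 : ∃ b', (x, b') ∈ step1 L H x := by
    rw [h1pos]; exact ⟨_, Set.mem_insert _ _⟩
  have hsm1 : SmallP M (step1 L H x) := by
    rw [h1pos]; exact hsm.insert _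
  obtain ⟨c, hc⟩ := hH1.back h1 hsm1 x
  have h2pos : step2 L (step1 L H x) x =
      Insert.insert ((⟨c, hc⟩ : ∃ c, Elem L (Insert.insert (c, x) (step1 L H x))).choose, x) (step1 L H x) := by
    unfold step2; rw [dif_pos ⟨c, hc⟩]
  refine ⟨?_, ?_, ?_⟩
  · show Elem L (step2 L (step1 L H x) x)
    rw [h2pos]; exact (⟨c, hc⟩ : ∃ c, Elem L (Insert.insert (c, x) (step1 L H x))).choose_spec
  · obtain ⟨b', hb'⟩ := hxH1
    exact ⟨b', subset_step2 _ _ hb'⟩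
  · show ∃ c', (c', x) ∈ step2 L (step1 L H x) x
    rw [h2pos]; exact ⟨_, Set.mem_insert _ _⟩

variable (L)
variable (r : M → M → Prop) [IsWellOrder M r] (G0 : Set (M × M))

noncomputable def FF : M → Set (M × M) :=
  (IsWellFounded.wf (α := M) (r := r)).fix
    (fun x ih => step L (G0 ∪ ⋃ y : {y // r y x}, ih y y.2) x)

noncomputable def prior (x : M) : Set (M × M) := G0 ∪ ⋃ y : {y // r y x}, FF L r G0 y

theorem FF_eq (x : M) : FF L r G0 x = step L (prior L r G0 x) x := by
  unfold FF prior
  exact WellFounded.fix_eq _ _ _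

variable {L r G0}

theorem G0_subset_prior (x : M) : G0 ⊆ prior L r G0 x := Set.subset_union_left

theorem prior_subset_FF (x : M) : prior L r G0 x ⊆ FF L r G0 x := by
  rw [FF_eq]; exact subset_step _ _

theorem G0_subset_FF (x : M) : G0 ⊆ FF L r G0 x :=
  (G0_subset_prior x).trans (prior_subset_FF x)

theorem FF_mono {y x : M} (h : r y x) : FF L r G0 y ⊆ FF L r G0 x := by
  refine subset_trans ?_ (prior_subset_FF x)
  refine subset_trans ?_ Set.subset_union_right
  exact Set.subset_iUnion_of_subset ⟨y, h⟩ subset_rfl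

/-- Elementarity of a directed union above `G0`. -/
theorem elem_of_directed {ι : Sort*} (F : ι → Set (M × M)) (hG0 : Elem L G0)
    (hsub : ∀ i, G0 ⊆ F i) (hdir : ∀ i j, F i ⊆ F j ∨ F j ⊆ F i) (hF : ∀ i, Elem L (F i)) :
    Elem L (G0 ∪ ⋃ i, F i) := by
  classical
  intro k φ t ht
  by_cases hι : Nonempty ι
  · obtain ⟨i₀⟩ := hι
    have hub : ∀ m (g : Fin m → ι), ∃ j, ∀ i, F (g i) ⊆ F j := by
      intro m
      induction m with
      | zero => exact fun g => ⟨i₀, fun i => i.elim0⟩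
      | succ m ih =>
        intro g
        obtain ⟨j, hj⟩ := ih (g ∘ Fin.castSucc)
        rcases hdir (g (Fin.last m)) j with h | h
        · refine ⟨j, fun i => ?_⟩
          refine Fin.lastCases h (fun i => hj i) i
        · refine ⟨g (Fin.last m), fun i => ?_⟩
          refine Fin.lastCases subset_rfl (fun i => (hj i).trans h) i
    have hch : ∀ i : Fin k, ∃ j : ι, t i ∈ F j := by
      intro i
      rcases ht i with h | h
      · exact ⟨i₀, hsub i₀ h⟩
      · obtain ⟨s, ⟨j, rfl⟩, hs⟩ := h
        exact ⟨j, hs⟩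
    choose g hg using hch
    obtain ⟨j, hj⟩ := hub k g
    exact hF j k φ t (fun i => hj i (hg i))
  · have hall : ∀ i, t i ∈ G0 := by
      intro i
      rcases ht i with h | h
      · exact h
      · obtain ⟨s, ⟨j, rfl⟩, _⟩ := h
        exact absurd ⟨j⟩ hι
    exact hG0 k φ t hall

theorem exists_rmax (s : Finset M) (hs : s.Nonempty) :
    ∃ z ∈ s, ∀ y ∈ s, y = z ∨ r y z := by
  classical
  induction s using Finset.induction_on with
  | empty => simp at hs
  | @insert w s hw ih =>
    rcases s.eq_empty_or_nonempty with rfl | hne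
    · refine ⟨w, Finset.mem_insert_self _ _, fun y hy => ?_⟩
      simp only [Finset.mem_insert, Finset.notMem_empty, or_false] at hy
      exact Or.inl hy
    · obtain ⟨z, hz, hmax⟩ := ih hne
      rcases trichotomous_of r w z with h | rfl | h
      · refine ⟨z, Finset.mem_insert_of_mem hz, fun y hy => ?_⟩
        rcases Finset.mem_insert.1 hy with rfl | hy
        · exact Or.inr h
        · exact hmax y hy
      · refine ⟨w, Finset.mem_insert_self _ _, fun y hy => ?_⟩
        rcases Finset.mem_insert.1 hy with rfl | hy
        · exact Or.inl rfl
        · exact hmax y hy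
      · refine ⟨w, Finset.mem_insert_self _ _, fun y hy => ?_⟩
        rcases Finset.mem_insert.1 hy with rfl | hy
        · exact Or.inl rfl
        · rcases hmax y hy with rfl | hy'
          · exact Or.inr h
          · exact Or.inr (_root_.trans hy' h)

theorem FF_directed (x : M) : ∀ (i j : {y // r y x}),
    FF L r G0 i.1 ⊆ FF L r G0 j.1 ∨ FF L r G0 j.1 ⊆ FF L r G0 i.1 := by
  intro i j
  rcases trichotomous_of r i.1 j.1 with h | h | h
  · exact Or.inl (FF_mono h)
  · rw [h]; exact Or.inl subset_rfl
  · exact Or.inr (FF_mono h)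

end Recursion
section Invariants
variable {L : FirstOrder.Language.{u, v}} {M : Type w} [L.Structure M]
variable {r : M → M → Prop} [IsWellOrder M r] {G0 : Set (M × M)}

theorem SmallP.mono {G G' : Set (M × M)} (h : SmallP M G') (hsub : G ⊆ G') : SmallP M G :=
  h.imp id fun h' => lt_of_le_of_lt (Cardinal.mk_le_mk_of_subset hsub) h'

theorem EE_le_two (x : M) : #↥(FF L r G0 x \ prior L r G0 x) ≤ 2 := by
  obtain ⟨p, q, hpq⟩ := step_subset (L := L) (prior L r G0 x) x
  rw [← FF_eq] at hpq
  have hsub : FF L r G0 x \ prior L r G0 x ⊆ {p, q} := by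
    intro z hz
    rcases hpq hz.1 with rfl | h
    · exact Or.inl rfl
    · rcases h with rfl | h
      · exact Or.inr rfl
      · exact absurd h hz.2
  refine le_trans (Cardinal.mk_le_mk_of_subset hsub) ?_
  refine le_trans (Cardinal.mk_insert_le) ?_
  simp
  norm_num

theorem FF_subset_union (x : M) : FF L r G0 x ⊆
    G0 ∪ ⋃ y : ↥(Insert.insert x {y | r y x}),
      (FF L r G0 y.1 \ prior L r G0 y.1) := by
  induction x using (IsWellFounded.wf (α := M) (r := r)).induction with
  | _ x ih =>
  intro p hp
  by_cases hpp : p ∈ prior L r G0 x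
  · rcases hpp with hp0 | hpu
    · exact Or.inl hp0
    · obtain ⟨s, ⟨⟨y, hy⟩, rfl⟩, hps⟩ := hpu
      rcases ih y hy hps with h0 | hu
      · exact Or.inl h0
      · obtain ⟨s, ⟨⟨z, hz⟩, rfl⟩, hpz⟩ := hu
        refine Or.inr (Set.mem_iUnion.2 ⟨⟨z, ?_⟩, hpz⟩)
        rcases hz with rfl | hz
        · exact Or.inr hy
        · exact Or.inr (_root_.trans hz hy)
  · exact Or.inr (Set.mem_iUnion.2 ⟨⟨x, Or.inl rfl⟩, hp, hpp⟩)

theorem smallP_FF (hG0 : SmallP M G0) (hseg : ∀ x : M, #{y // r y x} < #M) (x : M) :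
    SmallP M (FF L r G0 x) := by
  rcases finite_or_infinite M with hf | hf
  · exact Or.inl hf
  have haleph : ℵ₀ ≤ #M := Cardinal.infinite_iff.1 hf
  rcases hG0 with h | hG0'
  · exact Or.inl h
  refine Or.inr ?_
  refine lt_of_le_of_lt (Cardinal.mk_le_mk_of_subset (FF_subset_union x)) ?_
  refine lt_of_le_of_lt (Cardinal.mk_union_le _ _) ?_
  refine Cardinal.add_lt_of_lt haleph hG0' ?_
  refine lt_of_le_of_lt (Cardinal.mk_iUnion_le_sum_mk) ?_
  refine lt_of_le_of_lt (Cardinal.sum_le_sum _ (fun _ => 2) (fun y => EE_le_two _)) ?_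
  rw [Cardinal.sum_const']
  have h1 : #↥(Insert.insert x {y | r y x}) ≤ #{y | r y x} + 1 := Cardinal.mk_insert_le
  have h2 : (#{y | r y x} : Cardinal) < #M := hseg x
  have h3 : #↥(Insert.insert x {y | r y x}) < #M :=
    lt_of_le_of_lt h1 (Cardinal.add_lt_of_lt haleph h2
      (lt_of_lt_of_le Cardinal.one_lt_aleph0 haleph))
  exact Cardinal.mul_lt_of_lt haleph h3
    (lt_of_lt_of_le (Cardinal.nat_lt_aleph0 2) haleph)

theorem FF_good (h1 : Sat1 L M) (hG0 : Elem L G0) (hG0sm : SmallP M G0)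
    (hseg : ∀ x : M, #{y // r y x} < #M) :
    ∀ x : M, Elem L (FF L r G0 x) ∧ (∃ b, (x, b) ∈ FF L r G0 x) ∧
      (∃ c, (c, x) ∈ FF L r G0 x) := by
  intro x
  induction x using (IsWellFounded.wf (α := M) (r := r)).induction with
  | _ x ih =>
  have hprior : Elem L (prior L r G0 x) :=
    elem_of_directed (fun y : {y // r y x} => FF L r G0 y.1) hG0
      (fun y => G0_subset_FF y.1) (FF_directed x) (fun y => (ih y.1 y.2).1)
  have hsm : SmallP M (FF L r G0 x) := smallP_FF hG0sm hseg x
  have hsmp : SmallP M (prior L r G0 x) := hsm.mono (prior_subset_FF x)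
  rw [FF_eq]
  rw [FF_eq] at hsm
  exact step_elem h1 hprior hsmp x

end Invariants
section Equiv
open FirstOrder.Language.Structure
variable {L : FirstOrder.Language.{u, v}} {M : Type w} [L.Structure M]

theorem exists_equiv_of_graph {G : Set (M × M)} (hG : Elem L G)
    (htot : ∀ x, ∃ y, (x, y) ∈ G) (hsur : ∀ y, ∃ x, (x, y) ∈ G) :
    ∃ f : M ≃[L] M, ∀ p ∈ G, f p.1 = p.2 := by
  classical
  choose f hf using htot
  have hinj : Function.Injective f := fun x y hxy => hG.left_unique (hf x) (hxy ▸ hf y)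
  have hsurj : Function.Surjective f := fun y => by
    obtain ⟨x, hx⟩ := hsur y
    exact ⟨x, hG.right_unique (hf x) hx⟩
  have hfp : ∀ p ∈ G, f p.1 = p.2 := by
    rintro ⟨x, y⟩ hp
    exact hG.right_unique (hf x) hp
  refine ⟨⟨Equiv.ofBijective f ⟨hinj, hsurj⟩, ?_, ?_⟩, hfp⟩
  · intro m F x
    show f (funMap F x) = funMap F (f ∘ x)
    have h := hG (m + 1)
      (Term.equal (Term.func F (fun i => Term.var (Fin.castSucc i))) (Term.var (Fin.last m)))
      (Fin.snoc (fun i => (x i, f (x i))) (funMap F x, f (funMap F x)))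
      (by
        intro i
        refine Fin.lastCases ?_ (fun j => ?_) i
        · rw [Fin.snoc_last]; exact hf _
        · rw [Fin.snoc_castSucc]; exact hf _)
    simp only [Formula.realize_equal, Term.realize_func, Term.realize_var] at h
    have h1 : funMap F (fun i => ((Fin.snoc (fun i => (x i, f (x i)))
        (funMap F x, f (funMap F x)) : Fin (m+1) → M × M) (Fin.castSucc i)).1)
        = ((Fin.snoc (fun i => (x i, f (x i))) (funMap F x, f (funMap F x)) : Fin (m+1) → M × M)
            (Fin.last m)).1 := by
      simp only [Fin.snoc_castSucc, Fin.snoc_last]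
    have h2 := h.1 h1
    simp only [Fin.snoc_castSucc, Fin.snoc_last] at h2
    exact h2.symm
  · intro m R x
    show RelMap R (f ∘ x) ↔ RelMap R x
    have h := hG m (Relations.formula R (fun i => Term.var i)) (fun i => (x i, f (x i)))
      (fun i => hf _)
    simp only [Formula.realize_rel, Term.realize_var] at h
    exact h.symm

end Equiv
section Transfer
variable {L : FirstOrder.Language.{u, v}} {M : Type w} [L.Structure M]

theorem sat1_of_saturated
    (h : ∀ B : Set M, #B < #M → ∀ p : Set ((L[[B]]).Formula (Fin 1)),
      (∀ S : Finset ((L[[B]]).Formula (Fin 1)), ↑S ⊆ p →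
        ∃ a : M, ∀ φ ∈ S, φ.Realize (fun _ => a)) →
      ∃ a : M, ∀ φ ∈ p, φ.Realize (fun _ => a)) : Sat1 L M := by
  intro B hB p hp
  rcases hB with hf | hlt
  · haveI := hf
    obtain ⟨v, hv⟩ := finite_sat p (fun S hS => by
      obtain ⟨a, ha⟩ := hp S hS
      exact ⟨fun _ => a, ha⟩)
    refine ⟨v 0, fun φ hφ => ?_⟩
    have : (fun _ : Fin 1 => v 0) = v := funext fun i => by rw [Subsingleton.elim i 0]
    rw [this]
    exact hv φ hφ
  · exact h B hlt p hp

theorem sat1_reduct {L' : FirstOrder.Language.{u, v}} [L'.Structure M]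
    (φm : L →ᴸ L') [φm.IsExpansionOn M] (h : Sat1 L' M) : Sat1 L M := by
  classical
  intro B hB p hp
  set p' : Set ((L'[[B]]).Formula (Fin 1)) :=
    (fun ψ => (φm.addConstants ↑B).onFormula ψ) '' p with hp'def
  have hreal : ∀ (ψ : (L[[B]]).Formula (Fin 1)) (v : Fin 1 → M),
      ((φm.addConstants ↑B).onFormula ψ).Realize v ↔ ψ.Realize v := fun ψ v =>
    LHom.realize_onFormula _ _
  have hp'fs : ∀ S' : Finset ((L'[[B]]).Formula (Fin 1)), ↑S' ⊆ p' →
      ∃ a : M, ∀ ξ ∈ S', ξ.Realize (fun _ => a) := by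
    intro S' hS'
    set S : Finset ((L[[B]]).Formula (Fin 1)) :=
      S'.biUnion (fun ξ => if h : ξ ∈ p' then {h.choose} else ∅) with hS
    have hSp : ↑S ⊆ p := by
      intro ψ hψ
      simp only [hS, Finset.coe_biUnion, Set.mem_iUnion, Finset.mem_coe] at hψ
      obtain ⟨ξ, hξ, hψ⟩ := hψ
      rw [dif_pos (hS' hξ)] at hψ
      simp only [Finset.mem_singleton] at hψ
      exact hψ ▸ (hS' hξ).choose_spec.1
    obtain ⟨a, ha⟩ := hp S hSp
    refine ⟨a, fun ξ hξ => ?_⟩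
    have hm := hS' hξ
    rw [← hm.choose_spec.2, hreal]
    refine ha _ ?_
    simp only [hS, Finset.mem_biUnion]
    exact ⟨ξ, hξ, by rw [dif_pos hm]; simp⟩
  obtain ⟨a, ha⟩ := h B hB p' hp'fs
  refine ⟨a, fun ψ hψ => ?_⟩
  exact (hreal ψ _).1 (ha _ ⟨ψ, hψ, rfl⟩)

/-- The base graph consisting of the diagonal of `A` and the pairs `(b i, c i)` is
elementary when `b` and `c` have the same type over `A`. -/
theorem elem_base {A : Set M} {n : ℕ} {b c : Fin n → M}
    (hst : ∀ φ : (L[[A]]).Formula (Fin n), φ.Realize b ↔ φ.Realize c) :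
    Elem L ((fun a : M => (a, a)) '' A ∪ Set.range (fun i => (b i, c i))) := by
  classical
  intro k φ t ht
  have hch : ∀ i : Fin k, ((t i).1 ∈ A ∧ (t i).1 = (t i).2) ∨ ∃ j, t i = (b j, c j) := by
    intro i
    rcases ht i with ⟨a, haA, heq⟩ | ⟨j, hj⟩
    · rw [← heq]; exact Or.inl ⟨haA, rfl⟩
    · exact Or.inr ⟨j, hj.symm⟩
  set σ : Fin k → (L[[A]]).Term (Fin n) := fun i =>
    if h : (t i).1 ∈ A ∧ (t i).1 = (t i).2 then (L.con ⟨(t i).1, h.1⟩).term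
    else Term.var ((hch i).resolve_left h).choose with hσ
  set ψ : (L[[A]]).Formula (Fin n) := ((L.lhomWithConstants ↑A).onFormula φ).subst σ with hψ
  have hb : ψ.Realize b ↔ φ.Realize (fun i => (t i).1) := by
    have h0 : Formula.Realize (M := M) ψ b
        = BoundedFormula.Realize ψ b default := rfl
    rw [h0, hψ, BoundedFormula.realize_subst]
    have h1 : (fun a => Term.realize (M := M) b (σ a)) = fun i => (t i).1 := by
      funext i
      rw [hσ]
      by_cases h : (t i).1 ∈ A ∧ (t i).1 = (t i).2
      · simp [dif_pos h]
      · have hj := ((hch i).resolve_left h).choose_spec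
        simp only [dif_neg h, Term.realize_var]
        exact (congrArg Prod.fst hj).symm
    rw [h1]
    exact LHom.realize_onFormula _ _
  have hc : ψ.Realize c ↔ φ.Realize (fun i => (t i).2) := by
    have h0 : Formula.Realize (M := M) ψ c
        = BoundedFormula.Realize ψ c default := rfl
    rw [h0, hψ, BoundedFormula.realize_subst]
    have h1 : (fun a => Term.realize (M := M) c (σ a)) = fun i => (t i).2 := by
      funext i
      rw [hσ]
      by_cases h : (t i).1 ∈ A ∧ (t i).1 = (t i).2
      · simp only [dif_pos h, Term.realize_con]
        exact h.2
      · have hj := ((hch i).resolve_left h).choose_spec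
        simp only [dif_neg h, Term.realize_var]
        exact (congrArg Prod.snd hj).symm
    rw [h1]
    exact LHom.realize_onFormula _ _
  rw [← hb, ← hc]
  exact hst ψ

end Transfer
end S5

open Paper in
/-- If `(M,D)` is saturated and `D` is not `A`-definable, the orbit of `D` over `A`
is not a singleton. -/
theorem stmt5 (L : FirstOrder.Language) (M : Type w) [L.Structure M]
    (n : ℕ) (D : Set (Fin n → M))
    (hD : @IsSaturated (L.sum (relLang n)) M (expStruct L M n D))
    (A : Set M) (hA : #A < #M)
    (hnd : ¬ A.Definable L D) :
    ∃ f : M ≃[L] M, (∀ a ∈ A, f a = a) ∧ (fun x => ⇑f ∘ x) '' D ≠ D := by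
  classical
  letI S' : (L.sum (relLang n)).Structure M := expStruct L M n D
  haveI hexp : (LHom.sumInl : L →ᴸ L.sum (relLang n)).IsExpansionOn M :=
    ⟨fun f x => rfl, fun R x => rfl⟩
  have hsat' : S5.Sat1 (L.sum (relLang n)) M := S5.sat1_of_saturated hD
  have hsat : S5.Sat1 L M := S5.sat1_reduct LHom.sumInl hsat'
  by_cases hpair : ∃ b c : Fin n → M, b ∈ D ∧ c ∉ D ∧
      ∀ φ : (L[[A]]).Formula (Fin n), φ.Realize b ↔ φ.Realize c
  · obtain ⟨b, c, hbD, hcD, hst⟩ := hpair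
    set G0 : Set (M × M) := (fun a : M => (a, a)) '' A ∪ Set.range (fun i => (b i, c i)) with hG0
    have hG0e : S5.Elem L G0 := S5.elem_base hst
    have hG0sm : S5.SmallP M G0 := by
      rcases finite_or_infinite M with hf | hf
      · exact Or.inl hf
      · refine Or.inr (lt_of_le_of_lt (Cardinal.mk_union_le _ _) ?_)
        refine Cardinal.add_lt_of_lt (Cardinal.infinite_iff.1 hf) ?_ ?_
        · exact lt_of_le_of_lt Cardinal.mk_image_le hA
        · exact lt_of_lt_of_le (Set.finite_range _).lt_aleph0 (Cardinal.infinite_iff.1 hf)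
    obtain ⟨r, wo, hr⟩ := Cardinal.ord_eq M
    haveI := wo
    have hseg : ∀ x : M, #{y // r y x} < #M := fun x => Cardinal.card_typein_lt x hr
    have hFF := S5.FF_good (r := r) (G0 := G0) hsat hG0e hG0sm hseg
    set Gall : Set (M × M) := G0 ∪ ⋃ x : M, S5.FF L r G0 x with hGall
    have hGe : S5.Elem L Gall := by
      refine S5.elem_of_directed _ hG0e (fun x => S5.G0_subset_FF x) (fun x y => ?_)
        (fun x => (hFF x).1)
      rcases trichotomous_of r x y with h | h | h
      · exact Or.inl (S5.FF_mono h)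
      · rw [h]; exact Or.inl subset_rfl
      · exact Or.inr (S5.FF_mono h)
    have htot : ∀ x, ∃ y, (x, y) ∈ Gall := fun x =>
      ((hFF x).2.1).imp (fun y h => Or.inr (Set.mem_iUnion.2 ⟨x, h⟩))
    have hsur : ∀ y, ∃ x, (x, y) ∈ Gall := fun y =>
      ((hFF y).2.2).imp (fun x h => Or.inr (Set.mem_iUnion.2 ⟨y, h⟩))
    obtain ⟨f, hf⟩ := S5.exists_equiv_of_graph hGe htot hsur
    refine ⟨f, ?_, ?_⟩
    · intro a ha
      exact hf (a, a) (Or.inl (Or.inl ⟨a, ha, rfl⟩))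
    · intro heq
      have hfb : ⇑f ∘ b = c := by
        funext i
        exact hf (b i, c i) (Or.inl (Or.inr ⟨i, rfl⟩))
      exact hcD (by rw [← heq]; exact ⟨b, hbD, hfb⟩)
  · exfalso
    apply hnd
    -- the predicate formula
    have hPA : ∃ PA : ((L.sum (relLang n))[[A]]).Formula (Fin n),
        ∀ v : Fin n → M, PA.Realize v ↔ v ∈ D := by
      refine ⟨((L.sum (relLang n)).lhomWithConstants A).onFormula
        (Relations.formula (Sum.inr (PLift.up rfl)) (fun i => Term.var i)), fun v => ?_⟩
      rw [LHom.realize_onFormula]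
      exact Iff.rfl
    obtain ⟨PA, hPA⟩ := hPA
    -- translation of L-formulas over A into the expansion
    have htr : ∀ φL : (L[[A]]).Formula (Fin n), ∀ v : Fin n → M,
        ((LHom.addConstants ↑A (LHom.sumInl : L →ᴸ L.sum (relLang n))).onFormula φL).Realize v
          ↔ φL.Realize v := fun φL v => LHom.realize_onFormula _ _
    -- every element of D is isolated inside D
    have hψ : ∀ b : {v : Fin n → M // v ∈ D}, ∃ ψ : (L[[A]]).Formula (Fin n),
        ψ.Realize b.1 ∧ ∀ v : Fin n → M, ψ.Realize v → v ∈ D := by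
      rintro ⟨b, hb⟩
      by_contra hcon
      push_neg at hcon
      set p : Set (((L.sum (relLang n))[[A]]).Formula (Fin n)) :=
        {ξ | (∃ φL : (L[[A]]).Formula (Fin n), φL.Realize b ∧
              ∀ v : Fin n → M, (ξ.Realize v ↔ φL.Realize v)) ∨ ξ = PA.not} with hp
      have hpfs : ∀ S : Finset (((L.sum (relLang n))[[A]]).Formula (Fin n)), ↑S ⊆ p →
          ∃ v : Fin n → M, ∀ ξ ∈ S, ξ.Realize v := by
        intro S hS
        set SL : Finset ((L[[A]]).Formula (Fin n)) := S.biUnion (fun ξ =>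
          if h : ∃ φL : (L[[A]]).Formula (Fin n), φL.Realize b ∧
              ∀ v : Fin n → M, (ξ.Realize v ↔ φL.Realize v) then {h.choose} else ∅) with hSL
      -- the conjunction of SL
        obtain ⟨ψS, hψS⟩ := S5.exists_conj (M := M) SL
        have hψSb : ψS.Realize b := by
          rw [hψS]
          intro χ hχ
          simp only [hSL, Finset.mem_biUnion] at hχ
          obtain ⟨ξ, hξS, hχ⟩ := hχ
          split at hχ
          next h =>
            simp only [Finset.mem_singleton] at hχ
            exact hχ ▸ h.choose_spec.1
          next h => simp at hχ
        obtain ⟨v, hvr, hvD⟩ := hcon ψS hψSb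
        refine ⟨v, fun ξ hξ => ?_⟩
        rcases hS hξ with ⟨φL, hφb, hiff⟩ | rfl
        · have hch : ∃ φL : (L[[A]]).Formula (Fin n), φL.Realize b ∧
              ∀ v : Fin n → M, (ξ.Realize v ↔ φL.Realize v) := ⟨φL, hφb, hiff⟩
          rw [hch.choose_spec.2 v]
          refine (hψS v).1 hvr _ ?_
          simp only [hSL, Finset.mem_biUnion]
          exact ⟨ξ, hξ, by rw [dif_pos hch]; simp⟩
        · rw [Formula.realize_not, hPA]
          exact hvD
      obtain ⟨v, hv⟩ := S5.satK hsat' n A (Or.inr hA) p hpfs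
      have hvD : v ∉ D := by
        have := hv PA.not (Or.inr rfl)
        rwa [Formula.realize_not, hPA] at this
      refine hpair ⟨b, v, hb, hvD, fun φL => ⟨fun hφb => ?_, fun hφv => ?_⟩⟩
      · have hmem : ((LHom.addConstants ↑A (LHom.sumInl : L →ᴸ L.sum (relLang n))).onFormula φL) ∈ p :=
          Or.inl ⟨φL, hφb, htr φL⟩
        exact (htr φL v).1 (hv _ hmem)
      · by_contra hnb
        have hnb' : φL.not.Realize b := by rwa [Formula.realize_not]
        have hmem : ((LHom.addConstants ↑A (LHom.sumInl : L →ᴸ L.sum (relLang n))).onFormula φL.not) ∈ p :=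
          Or.inl ⟨φL.not, hnb', htr φL.not⟩
        have := (htr φL.not v).1 (hv _ hmem)
        rw [Formula.realize_not] at this
        exact this hφv
    choose ψf hψ1 hψ2 using hψ
    -- the type asserting membership in D but avoiding every isolating formula
    set q : Set (((L.sum (relLang n))[[A]]).Formula (Fin n)) :=
      {ξ | ξ = PA ∨ ∃ d : {v : Fin n → M // v ∈ D},
        ∀ v : Fin n → M, (ξ.Realize v ↔ ¬ (ψf d).Realize v)} with hq
    have hnreal : ¬ ∃ v : Fin n → M, ∀ ξ ∈ q, ξ.Realize v := by
      rintro ⟨v, hv⟩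
      have hvD : v ∈ D := (hPA v).1 (hv PA (Or.inl rfl))
      have hmem : ((LHom.addConstants ↑A (LHom.sumInl : L →ᴸ L.sum (relLang n))).onFormula
          (ψf ⟨v, hvD⟩)).not ∈ q := by
        refine Or.inr ⟨⟨v, hvD⟩, fun u => ?_⟩
        rw [Formula.realize_not, htr]
      have := hv _ hmem
      rw [Formula.realize_not, htr] at this
      exact this (hψ1 ⟨v, hvD⟩)
    have hqnfs : ∃ S : Finset (((L.sum (relLang n))[[A]]).Formula (Fin n)), ↑S ⊆ q ∧
        ¬ ∃ v : Fin n → M, ∀ ξ ∈ S, ξ.Realize v := by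
      by_contra hcon
      push_neg at hcon
      refine hnreal (S5.satK hsat' n A (Or.inr hA) q (fun S hS => ?_))
      rcases hcon S hS with ⟨v, hv⟩
      exact ⟨v, hv⟩
    obtain ⟨S, hSq, hSns⟩ := hqnfs
    set F : Finset ((L[[A]]).Formula (Fin n)) := S.biUnion (fun ξ =>
      if h : ∃ d : {v : Fin n → M // v ∈ D},
          ∀ v : Fin n → M, (ξ.Realize v ↔ ¬ (ψf d).Realize v) then {ψf h.choose} else ∅) with hF
    have hFsub : ∀ χ ∈ F, ∃ d : {v : Fin n → M // v ∈ D}, χ = ψf d := by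
      intro χ hχ
      simp only [hF, Finset.mem_biUnion] at hχ
      obtain ⟨ξ, hξS, hχ⟩ := hχ
      split at hχ
      next h =>
        simp only [Finset.mem_singleton] at hχ
        exact ⟨h.choose, hχ⟩
      next h => simp at hχ
    by_cases hcov : ∀ v ∈ D, ∃ χ ∈ F, χ.Realize v
    · obtain ⟨ψd, hψd⟩ := S5.exists_disj (M := M) F
      refine ⟨ψd, ?_⟩
      ext v
      simp only [Set.mem_setOf_eq]
      constructor
      · intro hvD
        exact (hψd v).2 (hcov v hvD)
      · intro hvr
        obtain ⟨χ, hχF, hχv⟩ := (hψd v).1 hvr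
        obtain ⟨d, rfl⟩ := hFsub χ hχF
        exact hψ2 d v hχv
    · push_neg at hcov
      obtain ⟨d, hdD, hdav⟩ := hcov
      refine absurd ⟨d, fun ξ hξ => ?_⟩ hSns
      rcases hSq hξ with rfl | ⟨d', hd'⟩
      · exact (hPA d).2 hdD
      · have hch : ∃ d' : {v : Fin n → M // v ∈ D},
            ∀ v : Fin n → M, (ξ.Realize v ↔ ¬ (ψf d').Realize v) := ⟨d', hd'⟩
        rw [hch.choose_spec d]
        refine hdav _ ?_
        simp only [hF, Finset.mem_biUnion]
        exact ⟨ξ, hξ, by rw [dif_pos hch]; simp⟩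
end

section
/- Let T be an o-minimal theory, M a model of T, and p(x) a complete non-algebraic 1-type over M. Then p determines a cut M = B₁ ∪ B₂ with B₁ < B₂ such that every element a of any elementary extension of M with B₁ < a < B₂ realizes p. -/
open FirstOrder FirstOrder.Language Set Cardinal

universe u v w

namespace Stmt15Aux

variable {L : FirstOrder.Language} [L.IsOrdered]

/-- The formula "param < x". -/
def ltF (L : FirstOrder.Language) [L.IsOrdered] : L.Formula (Fin 1 ⊕ Fin 1) :=
  Term.lt (Term.var (Sum.inl (Sum.inl 0))) (Term.var (Sum.inl (Sum.inr 0)))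

/-- The formula "param = x". -/
def eqF (L : FirstOrder.Language) : L.Formula (Fin 1 ⊕ Fin 1) :=
  Term.equal (Term.var (Sum.inl 0)) (Term.var (Sum.inr 0))

variable {M : Type w} [L.Structure M] [LinearOrder M] [L.OrderedStructure M]

@[simp] lemma realize_ltF {u b : Fin 1 → M} :
    (ltF L).Realize (Sum.elim u b) ↔ u 0 < b 0 := by
  simp [ltF, Formula.Realize]

@[simp] lemma realize_eqF {u b : Fin 1 → M} :
    (eqF L).Realize (Sum.elim u b) ↔ u 0 = b 0 := by
  simp [eqF]

/-- The `L[[univ]]`-formula `φ(v, x)` with the parameters plugged in as constants. -/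
noncomputable def withParams {n : ℕ} (φ : L.Formula (Fin n ⊕ Fin 1)) (v : Fin n → M) :
    (L[[(Set.univ : Set M)]]).Formula (Fin 1) :=
  ((L.lhomWithConstants (Set.univ : Set M)).onFormula φ).subst
    (Sum.elim (fun i => Constants.term (L.con (⟨v i, Set.mem_univ _⟩ : (Set.univ : Set M))))
      fun _ => Term.var 0)

lemma realize_withParams {n : ℕ} (φ : L.Formula (Fin n ⊕ Fin 1)) (v : Fin n → M) (x : M) :
    (withParams φ v).Realize (fun _ : Fin 1 => x) ↔ φ.Realize (Sum.elim v fun _ => x) := by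
  have h1 : (withParams φ v).Realize (fun _ : Fin 1 => x) ↔
      ((L.lhomWithConstants (Set.univ : Set M)).onFormula φ).Realize
        (fun a => ((Sum.elim
          (fun i => Constants.term (L.con (⟨v i, Set.mem_univ _⟩ : (Set.univ : Set M))))
          (fun _ => Term.var 0) : (Fin n ⊕ Fin 1) → _) a).realize (fun _ : Fin 1 => x)) :=
    BoundedFormula.realize_subst
  rw [h1, LHom.realize_onFormula]
  have h2 : (fun a => ((Sum.elim
          (fun i => Constants.term (L.con (⟨v i, Set.mem_univ _⟩ : (Set.univ : Set M))))
          (fun _ => Term.var 0) : (Fin n ⊕ Fin 1) → _) a).realize (fun _ : Fin 1 => x))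
      = Sum.elim v fun _ => x := by
    funext a; rcases a with i | i <;> rfl
  rw [h2]

/-- Relabeling map sending the `x` variable to the bound variable. -/
def relmap (n : ℕ) : Fin n ⊕ Fin 1 → (Fin n ⊕ Fin 2) ⊕ Fin 1 :=
  Sum.elim (fun i => Sum.inl (Sum.inl i)) fun _ => Sum.inr 0

/-- The formula `∀ x, (guard_L → guard_R → φ(v,x))` with optional bound guards. -/
def chi (L : FirstOrder.Language) [L.IsOrdered] (n : ℕ) (φ : L.Formula (Fin n ⊕ Fin 1))
    (bL bR : Bool) : L.Formula (Fin n ⊕ Fin 2) :=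
  ((cond bL (Term.lt (Term.var (Sum.inl (Sum.inr 0))) (Term.var (Sum.inr 0))) ⊤).imp
    ((cond bR (Term.lt (Term.var (Sum.inr 0)) (Term.var (Sum.inl (Sum.inr 1)))) ⊤).imp
      (BoundedFormula.relabel (relmap n) φ))).all

lemma realize_chi {P : Type w} [L.Structure P] [LinearOrder P] [L.OrderedStructure P]
    {n : ℕ} (φ : L.Formula (Fin n ⊕ Fin 1)) (bL bR : Bool) (u : Fin n → P) (w : Fin 2 → P) :
    (chi L n φ bL bR).Realize (Sum.elim u w) ↔
      ∀ x : P, (bL = true → w 0 < x) → (bR = true → x < w 1) →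
        φ.Realize (Sum.elim u fun _ => x) := by
  have hphi : ∀ xs : Fin 1 → P, (BoundedFormula.relabel (relmap n) φ).Realize (Sum.elim u w) xs ↔
      φ.Realize (Sum.elim u fun _ => xs 0) := by
    intro xs
    rw [BoundedFormula.realize_relabel]
    have h0 : xs ∘ Fin.natAdd 1 = (default : Fin 0 → P) := funext fun i => i.elim0
    have h1 : (Sum.elim (Sum.elim u w) (xs ∘ Fin.castAdd 0) ∘ relmap n)
        = Sum.elim u fun _ => xs 0 := by
      funext a; rcases a with i | i <;> rfl
    rw [h0, h1]
    rfl
  rw [chi, Formula.Realize, BoundedFormula.realize_all]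
  apply forall_congr'
  intro x
  rw [BoundedFormula.realize_imp, BoundedFormula.realize_imp, hphi]
  have hx0 : (Fin.snoc (default : Fin 0 → P) x : Fin 1 → P) 0 = x := by simp [Fin.snoc]
  rw [hx0]
  cases bL <;> cases bR <;> simp [Fin.snoc]

lemma cut_transfer {M N : Type w} [L.Structure M] [LinearOrder M] [L.OrderedStructure M]
    [L.Structure N] [LinearOrder N] [L.OrderedStructure N]
    (g : M ↪ₑ[L] N) {n : ℕ} (φ : L.Formula (Fin n ⊕ Fin 1)) (v : Fin n → M)
    (bL bR : Bool) (c d : M) (a : N)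
    (hM : ∀ x : M, (bL = true → c < x) → (bR = true → x < d) →
      φ.Realize (Sum.elim v fun _ => x))
    (haL : bL = true → g c < a) (haR : bR = true → a < g d) :
    φ.Realize (Sum.elim (⇑g ∘ v) fun _ => a) := by
  have hMχ : (chi L n φ bL bR).Realize (Sum.elim v ![c, d]) := by
    rw [realize_chi]
    intro x h1 h2
    exact hM x (fun hb => by simpa using h1 hb) (fun hb => by simpa using h2 hb)
  have hNχ : (chi L n φ bL bR).Realize (⇑g ∘ Sum.elim v ![c, d]) := (g.map_formula _ _).2 hMχ
  have heq : ⇑g ∘ Sum.elim v ![c, d] = Sum.elim (⇑g ∘ v) ![g c, g d] := by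
    funext i
    rcases i with i | i
    · rfl
    · fin_cases i <;> rfl
  rw [heq, realize_chi] at hNχ
  exact hNχ a (fun hb => by simpa using haL hb) (fun hb => by simpa using haR hb)

end Stmt15Aux

open Paper in
/-- In an o-minimal theory, a complete non-algebraic 1-type over a model `M` determines a
cut `(B₁, B₂)` of `M`, and any element of an elementary extension lying in this cut
realizes the type. -/
theorem stmt15 (L : FirstOrder.Language) [L.IsOrdered] (M : Type w) [L.Structure M]
    [LinearOrder M] [L.OrderedStructure M] [DenselyOrdered M]
    (hOmin : ∀ (A : Set M) (φ : (L[[A]]).Formula (Fin 1)), ∃ F : Finset M,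
      ∀ x y : M, x ∉ F → y ∉ F → (∀ z ∈ F, z < x ↔ z < y) →
        (φ.Realize (fun _ => x) ↔ φ.Realize (fun _ => y)))
    (p : Set (Σ n : ℕ, L.Formula (Fin n ⊕ Fin 1) × (Fin n → M)))
    (hfin : ∀ S : Finset (Σ n : ℕ, L.Formula (Fin n ⊕ Fin 1) × (Fin n → M)), ↑S ⊆ p →
      ∃ a : M, ∀ e ∈ S, e.2.1.Realize (Sum.elim e.2.2 fun _ => a))
    (hcomp : ∀ (n : ℕ) (φ : L.Formula (Fin n ⊕ Fin 1)) (v : Fin n → M),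
      (⟨n, φ, v⟩ : Σ n : ℕ, L.Formula (Fin n ⊕ Fin 1) × (Fin n → M)) ∈ p ∨
      (⟨n, φ.not, v⟩ : Σ n : ℕ, L.Formula (Fin n ⊕ Fin 1) × (Fin n → M)) ∈ p)
    (hnalg : ¬ ∃ a : M, ∀ e ∈ p, e.2.1.Realize (Sum.elim e.2.2 fun _ => a)) :
    ∃ B₁ B₂ : Set M, B₁ ∪ B₂ = Set.univ ∧ (∀ x ∈ B₁, ∀ y ∈ B₂, x < y) ∧
      ∀ (N : Type w) [L.Structure N] [LinearOrder N] [L.OrderedStructure N],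
        ∀ (g : M ↪ₑ[L] N) (a : N),
          (∀ x ∈ B₁, g x < a) → (∀ y ∈ B₂, a < g y) →
          ∀ e ∈ p, e.2.1.Realize (Sum.elim (⇑g ∘ e.2.2) fun _ => a) := by
  classical
  set B₁ : Set M :=
    {m | (⟨1, Stmt15Aux.ltF L, fun _ => m⟩ : Σ n : ℕ, L.Formula (Fin n ⊕ Fin 1) × (Fin n → M)) ∈ p}
    with hB₁def
  -- negated less-than formulas are in p for elements not in B₁
  have hnlt : ∀ z : M, z ∉ B₁ →
      (⟨1, (Stmt15Aux.ltF L).not, fun _ => z⟩ :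
        Σ n : ℕ, L.Formula (Fin n ⊕ Fin 1) × (Fin n → M)) ∈ p := by
    intro z hz
    rcases hcomp 1 (Stmt15Aux.ltF L) (fun _ => z) with h | h
    · exact absurd h hz
    · exact h
  -- equality formulas are never in p
  have hneq : ∀ z : M,
      (⟨1, Stmt15Aux.eqF L, fun _ => z⟩ :
        Σ n : ℕ, L.Formula (Fin n ⊕ Fin 1) × (Fin n → M)) ∉ p := by
    intro z hz
    apply hnalg
    refine ⟨z, fun e' he' => ?_⟩
    obtain ⟨b, hb⟩ := hfin {⟨1, Stmt15Aux.eqF L, fun _ => z⟩, e'} (by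
      intro e'' he''
      rcases Finset.mem_insert.1 he'' with rfl | h
      · exact hz
      · rw [Finset.mem_singleton] at h; exact h ▸ he')
    have h1 := hb _ (Finset.mem_insert_self _ _)
    have h2 := hb e' (Finset.mem_insert.2 (Or.inr (Finset.mem_singleton_self _)))
    have hz' : z = b := by simpa using h1
    rw [hz']
    exact h2
  have hne : ∀ z : M,
      (⟨1, (Stmt15Aux.eqF L).not, fun _ => z⟩ :
        Σ n : ℕ, L.Formula (Fin n ⊕ Fin 1) × (Fin n → M)) ∈ p :=
    fun z => (hcomp 1 (Stmt15Aux.eqF L) (fun _ => z)).resolve_left (hneq z)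
  refine ⟨B₁, B₁ᶜ, Set.union_compl_self _, ?_, ?_⟩
  · -- the cut ordering
    intro x hx y hy
    obtain ⟨a, ha⟩ := hfin
      {(⟨1, Stmt15Aux.ltF L, fun _ => x⟩ : Σ n : ℕ, L.Formula (Fin n ⊕ Fin 1) × (Fin n → M)),
       ⟨1, (Stmt15Aux.ltF L).not, fun _ => y⟩} (by
      intro e'' he''
      rcases Finset.mem_insert.1 he'' with rfl | h
      · exact hx
      · rw [Finset.mem_singleton] at h; exact h ▸ hnlt y hy)
    have h1 : x < a := by simpa using ha _ (Finset.mem_insert_self _ _)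
    have h2 : ¬ y < a := by
      have := ha _ (Finset.mem_insert.2 (Or.inr (Finset.mem_singleton_self _)))
      simpa [Formula.realize_not] using this
    exact lt_of_lt_of_le h1 (not_lt.1 h2)
  · -- the realization property
    intro N _ _ _ g a ha₁ ha₂ e he
    obtain ⟨n, φ, v⟩ := e
    obtain ⟨F, hF⟩ := hOmin Set.univ (Stmt15Aux.withParams φ v)
    -- Key fact: any x in M respecting the cut of F realizes φ
    have K : ∀ x : M, (∀ z ∈ F, z ∈ B₁ → z < x) → (∀ z ∈ F, z ∉ B₁ → x < z) →
        φ.Realize (Sum.elim v fun _ => x) := by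
      intro x hx1 hx2
      set S : Finset (Σ n : ℕ, L.Formula (Fin n ⊕ Fin 1) × (Fin n → M)) :=
        insert ⟨n, φ, v⟩ (F.biUnion fun z =>
          {⟨1, if z ∈ B₁ then Stmt15Aux.ltF L else (Stmt15Aux.ltF L).not, fun _ => z⟩,
           ⟨1, (Stmt15Aux.eqF L).not, fun _ => z⟩}) with hSdef
      have hSp : ↑S ⊆ p := by
        intro e' he'
        rcases Finset.mem_insert.1 he' with rfl | h
        · exact he
        · obtain ⟨z, hz, hz'⟩ := Finset.mem_biUnion.1 h
          rcases Finset.mem_insert.1 hz' with rfl | h'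
          · by_cases hzB : z ∈ B₁
            · rw [if_pos hzB]; exact hzB
            · rw [if_neg hzB]; exact hnlt z hzB
          · rw [Finset.mem_singleton] at h'
            exact h' ▸ hne z
      obtain ⟨b, hb⟩ := hfin S hSp
      have hbφ : φ.Realize (Sum.elim v fun _ => b) := hb _ (Finset.mem_insert_self _ _)
      have hbmem : ∀ z ∈ F, ∀ e' ∈ ({⟨1, if z ∈ B₁ then Stmt15Aux.ltF L
            else (Stmt15Aux.ltF L).not, fun _ => z⟩,
           ⟨1, (Stmt15Aux.eqF L).not, fun _ => z⟩} :
            Finset (Σ n : ℕ, L.Formula (Fin n ⊕ Fin 1) × (Fin n → M))), e' ∈ S :=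
        fun z hz e' he' => Finset.mem_insert.2 (Or.inr (Finset.mem_biUnion.2 ⟨z, hz, he'⟩))
      have hbne : ∀ z ∈ F, z ≠ b := by
        intro z hz
        have := hb _ (hbmem z hz _ (Finset.mem_insert.2 (Or.inr (Finset.mem_singleton_self _))))
        simpa [Formula.realize_not] using this
      have hblt : ∀ z ∈ F, z ∈ B₁ → z < b := by
        intro z hz hzB
        have := hb _ (hbmem z hz _ (Finset.mem_insert_self _ _))
        rw [if_pos hzB] at this
        simpa using this
      have hbnlt : ∀ z ∈ F, z ∉ B₁ → ¬ z < b := by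
        intro z hz hzB
        have := hb _ (hbmem z hz _ (Finset.mem_insert_self _ _))
        rw [if_neg hzB] at this
        simpa [Formula.realize_not] using this
      have hxF : x ∉ F := by
        intro hxf
        by_cases hxb : x ∈ B₁
        · exact lt_irrefl x (hx1 x hxf hxb)
        · exact lt_irrefl x (hx2 x hxf hxb)
      have hbF : b ∉ F := fun hbf => (hbne b hbf) rfl
      have hcut : ∀ z ∈ F, z < x ↔ z < b := by
        intro z hz
        by_cases hzB : z ∈ B₁
        · exact iff_of_true (hx1 z hz hzB) (hblt z hz hzB)
        · exact iff_of_false (asymm (hx2 z hz hzB)) (hbnlt z hz hzB)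
      exact (Stmt15Aux.realize_withParams φ v x).1
        ((hF x b hxF hbF hcut).2 ((Stmt15Aux.realize_withParams φ v b).2 hbφ))
    -- choose the endpoints
    set F₁ : Finset M := F.filter (· ∈ B₁) with hF₁def
    set F₂ : Finset M := F.filter (· ∉ B₁) with hF₂def
    obtain ⟨m₀, -⟩ := hfin ∅ (by simp)
    set c : M := if h : F₁.Nonempty then F₁.max' h else m₀ with hcdef
    set d : M := if h : F₂.Nonempty then F₂.min' h else m₀ with hddef
    refine Stmt15Aux.cut_transfer g φ v (decide F₁.Nonempty) (decide F₂.Nonempty) c d a ?_ ?_ ?_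
    · intro x h1 h2
      apply K x
      · intro z hz hzB
        have hzF₁ : z ∈ F₁ := Finset.mem_filter.2 ⟨hz, hzB⟩
        have hne₁ : F₁.Nonempty := ⟨z, hzF₁⟩
        have hc : c = F₁.max' hne₁ := by rw [hcdef, dif_pos hne₁]
        have hcx : c < x := h1 (decide_eq_true hne₁)
        exact lt_of_le_of_lt (hc ▸ Finset.le_max' F₁ z hzF₁) hcx
      · intro z hz hzB
        have hzF₂ : z ∈ F₂ := Finset.mem_filter.2 ⟨hz, hzB⟩
        have hne₂ : F₂.Nonempty := ⟨z, hzF₂⟩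
        have hd : d = F₂.min' hne₂ := by rw [hddef, dif_pos hne₂]
        have hxd : x < d := h2 (decide_eq_true hne₂)
        exact lt_of_lt_of_le hxd (hd ▸ Finset.min'_le F₂ z hzF₂)
    · intro hb
      have hne₁ : F₁.Nonempty := of_decide_eq_true hb
      have hc : c = F₁.max' hne₁ := by rw [hcdef, dif_pos hne₁]
      have : c ∈ B₁ := by
        rw [hc]
        exact (Finset.mem_filter.1 (F₁.max'_mem hne₁)).2
      exact ha₁ c this
    · intro hb
      have hne₂ : F₂.Nonempty := of_decide_eq_true hb
      have hd : d = F₂.min' hne₂ := by rw [hddef, dif_pos hne₂]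
      have : d ∈ B₁ᶜ := by
        rw [hd]
        exact (Finset.mem_filter.1 (F₂.min'_mem hne₂)).2
      exact ha₂ d this
end
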